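/- The function F(x) = ‖x⁺‖_p² (squared p-norm of the positive part of x) on ℝ^n, for p ≥ 2, satisfies F((x+y)⁺) ≤ F(x) + ⟨g, y⟩ + (p−1)‖y‖_p² for some subgradient g of F at x, i.e., F is positive invariant and smooth with constant L = 2(p−1) with respect to the p-norm. -/

import Mathlib

/-- The `p`-norm of a vector in `ℝ^n`. -/
noncomputable def pNorm {n : ℕ} (p : ℝ) (x : Fin n → ℝ) : ℝ :=
  (∑ i, |x i| ^ p) ^ (1 / p)

/-- The squared-`p`-norm-of-positive-part potential. -/
noncomputable def polyPot {n : ℕ} (p : ℝ) (x : Fin n → ℝ) : ℝ :=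
  pNorm p (fun i => max (x i) 0) ^ 2

open Real Finset Filter Topology

lemma reluPow_deriv_pos {q s : ℝ} (hs : 0 < s) :
    HasDerivAt (fun r : ℝ => max r 0 ^ q) (q * s ^ (q - 1)) s := by
  have h : HasDerivAt (fun r : ℝ => r ^ q) (q * s ^ (q - 1)) s :=
    Real.hasDerivAt_rpow_const (Or.inl hs.ne')
  apply h.congr_of_eventuallyEq
  filter_upwards [lt_mem_nhds hs] with r hr
  rw [max_eq_left hr.le]

lemma reluPow_deriv_neg {q s : ℝ} (hq : 0 < q) (hs : s < 0) :
    HasDerivAt (fun r : ℝ => max r 0 ^ q) 0 s := by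
  have h : HasDerivAt (fun _ : ℝ => (0:ℝ)) 0 s := hasDerivAt_const s 0
  apply h.congr_of_eventuallyEq
  filter_upwards [gt_mem_nhds hs] with r hr
  rw [max_eq_right hr.le, Real.zero_rpow hq.ne']

lemma reluPow_deriv_zero {q : ℝ} (hq : 1 < q) :
    HasDerivAt (fun r : ℝ => max r 0 ^ q) 0 0 := by
  have hq0 : q ≠ 0 := by linarith
  have hq1 : q - 1 ≠ 0 := by intro h; nlinarith
  rw [hasDerivAt_iff_tendsto]
  have h0 : Tendsto (fun r : ℝ => |r| ^ (q - 1)) (𝓝 0) (𝓝 0) := by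
    have hc : ContinuousAt (fun z : ℝ => z ^ (q - 1)) |(0:ℝ)| :=
      Real.continuousAt_rpow_const _ _ (Or.inr (by linarith))
    have := (hc.comp continuous_abs.continuousAt).tendsto
    simpa [Function.comp_def, Real.zero_rpow hq1] using this
  apply squeeze_zero (fun r => by positivity) _ h0
  intro r
  rcases lt_trichotomy r 0 with h | h | h
  · rw [max_eq_right h.le]
    simp [Real.zero_rpow hq0]
    positivity
  · simp [h]
    positivity
  · rw [max_eq_left h.le]
    have : max (0:ℝ) 0 = 0 := by simp
    rw [this, Real.zero_rpow hq0]
    simp only [sub_zero, smul_zero, sub_zero, Real.norm_eq_abs]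
    rw [abs_of_nonneg (Real.rpow_nonneg h.le q), abs_of_pos h,
      Real.rpow_sub h, Real.rpow_one]
    rw [inv_mul_eq_div]



lemma reluPow_deriv {q : ℝ} (hq : 1 < q) (s : ℝ) :
    HasDerivAt (fun r : ℝ => max r 0 ^ q) (q * max s 0 ^ (q - 1)) s := by
  rcases lt_trichotomy s 0 with h | h | h
  · have : q * max s 0 ^ (q - 1) = 0 := by
      rw [max_eq_right h.le, Real.zero_rpow (by intro hc; nlinarith : q - 1 ≠ 0), mul_zero]
    rw [this]; exact reluPow_deriv_neg (by linarith) h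
  · subst h
    have : q * max (0:ℝ) 0 ^ (q - 1) = 0 := by
      simp [Real.zero_rpow (by intro hc; nlinarith : q - 1 ≠ 0)]
    rw [this]; exact reluPow_deriv_zero hq
  · rw [max_eq_left h.le]; exact reluPow_deriv_pos h

lemma mono_basic {a b : ℝ} {H : ℝ → ℝ} (hc : Continuous H)
    (hd : ∀ t ∈ Set.Ioo a b, ∃ d, 0 ≤ d ∧ HasDerivAt H d t) (hab : a ≤ b) : H a ≤ H b := by
  have hmono := monotoneOn_of_deriv_nonneg (convex_Icc a b) hc.continuousOn
    (fun t ht => by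
      rw [interior_Icc] at ht
      obtain ⟨d, _, hdd⟩ := hd t ht
      exact hdd.differentiableAt.differentiableWithinAt)
    (fun t ht => by
      rw [interior_Icc] at ht
      obtain ⟨d, hd0, hdd⟩ := hd t ht
      rw [hdd.deriv]; exact hd0)
  exact hmono (Set.left_mem_Icc.2 hab) (Set.right_mem_Icc.2 hab) hab

lemma mono_except (E : Finset ℝ) {H : ℝ → ℝ} (hc : Continuous H)
    (hd : ∀ t ∉ E, ∃ d, 0 ≤ d ∧ HasDerivAt H d t) :
    ∀ a b : ℝ, a ≤ b → H a ≤ H b := by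
  classical
  suffices key : ∀ m : ℕ, ∀ a b : ℝ, a ≤ b →
      (E.filter (fun e => a < e ∧ e < b)).card ≤ m → H a ≤ H b by
    intro a b hab; exact key _ a b hab le_rfl
  intro m
  induction m with
  | zero =>
    intro a b hab hcard
    refine mono_basic hc (fun t ht => hd t ?_) hab
    intro htE
    have hm : t ∈ E.filter (fun e => a < e ∧ e < b) :=
      Finset.mem_filter.2 ⟨htE, ht.1, ht.2⟩
    have := Finset.card_eq_zero.1 (Nat.le_zero.1 hcard)
    rw [this] at hm
    exact absurd hm (Finset.notMem_empty t)
  | succ m ih =>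
    intro a b hab hcard
    by_cases hex : ∃ e ∈ E, a < e ∧ e < b
    · obtain ⟨e, heE, hae, heb⟩ := hex
      have hmem : e ∈ E.filter (fun e => a < e ∧ e < b) :=
        Finset.mem_filter.2 ⟨heE, hae, heb⟩
      have h1 : (E.filter (fun e' => a < e' ∧ e' < e)).card ≤ m := by
        have hsub : E.filter (fun e' => a < e' ∧ e' < e) ⊆
            (E.filter (fun e' => a < e' ∧ e' < b)).erase e := by
          intro t ht
          rw [Finset.mem_filter] at ht
          exact Finset.mem_erase.2 ⟨ne_of_lt ht.2.2,
            Finset.mem_filter.2 ⟨ht.1, ht.2.1, ht.2.2.trans heb⟩⟩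
        have := Finset.card_le_card hsub
        rw [Finset.card_erase_of_mem hmem] at this
        omega
      have h2 : (E.filter (fun e' => e < e' ∧ e' < b)).card ≤ m := by
        have hsub : E.filter (fun e' => e < e' ∧ e' < b) ⊆
            (E.filter (fun e' => a < e' ∧ e' < b)).erase e := by
          intro t ht
          rw [Finset.mem_filter] at ht
          exact Finset.mem_erase.2 ⟨(ne_of_lt ht.2.1).symm,
            Finset.mem_filter.2 ⟨ht.1, hae.trans ht.2.1, ht.2.2⟩⟩
        have := Finset.card_le_card hsub
        rw [Finset.card_erase_of_mem hmem] at this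
        omega
      exact (ih a e hae.le h1).trans (ih e b heb.le h2)
    · refine mono_basic hc (fun t ht => hd t ?_) hab
      intro htE
      exact hex ⟨t, htE, ht.1, ht.2⟩


lemma holder1 {n : ℕ} {p : ℝ} (hp : 1 < p) (v w : Fin n → ℝ) (hv : ∀ i, 0 ≤ v i) :
    ∑ i, v i ^ (p - 1) * w i ≤ (∑ i, v i ^ p) ^ ((p - 1) / p) * (∑ i, |w i| ^ p) ^ (1 / p) := by
  have hp1 : p - 1 ≠ 0 := by intro h; nlinarith
  have hpq : (p / (p - 1)).HolderConjugate p := (Real.HolderConjugate.conjExponent hp).symm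
  have h := Real.inner_le_Lp_mul_Lq (s := Finset.univ) (fun i => v i ^ (p - 1)) w hpq
  have e1 : ∀ i : Fin n, |v i ^ (p - 1)| ^ (p / (p - 1)) = v i ^ p := by
    intro i
    rw [abs_of_nonneg (Real.rpow_nonneg (hv i) _), ← Real.rpow_mul (hv i)]
    congr 1
    rw [mul_comm, div_mul_cancel₀ _ hp1]
  rw [one_div_div] at h
  calc ∑ i, v i ^ (p - 1) * w i
      ≤ (∑ i, |v i ^ (p - 1)| ^ (p / (p - 1))) ^ ((p - 1) / p) * (∑ i, |w i| ^ p) ^ (1 / p) := h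
    _ = (∑ i, v i ^ p) ^ ((p - 1) / p) * (∑ i, |w i| ^ p) ^ (1 / p) := by
        congr 2
        exact Finset.sum_congr rfl fun i _ => e1 i

lemma holder1_abs {n : ℕ} {p : ℝ} (hp : 1 < p) (v w : Fin n → ℝ) (hv : ∀ i, 0 ≤ v i) :
    |∑ i, v i ^ (p - 1) * w i| ≤ (∑ i, v i ^ p) ^ ((p - 1) / p) * (∑ i, |w i| ^ p) ^ (1 / p) := by
  rw [abs_le]
  constructor
  · have h := holder1 hp v (fun i => -w i) hv
    simp only [mul_neg, Finset.sum_neg_distrib, abs_neg] at h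
    linarith
  · exact holder1 hp v w hv

lemma holder2 {n : ℕ} {p : ℝ} (hp : 2 < p) (u w : Fin n → ℝ) :
    ∑ i, (if 0 < u i then u i ^ (p - 2) else 0) * w i ^ 2
      ≤ (∑ i, max (u i) 0 ^ p) ^ ((p - 2) / p) * (∑ i, |w i| ^ p) ^ (2 / p) := by
  have hp0 : (0:ℝ) < p := by linarith
  have hp2 : p - 2 ≠ 0 := by intro h; nlinarith
  have hpq : (p / (p - 2)).HolderConjugate (p / 2) := by
    rw [Real.holderConjugate_iff]
    constructor
    · rw [lt_div_iff₀ (by linarith : (0:ℝ) < p - 2)]; linarith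
    · rw [inv_div, inv_div]
      field_simp
      ring
  have h := Real.inner_le_Lp_mul_Lq (s := Finset.univ)
    (fun i => if 0 < u i then u i ^ (p - 2) else 0) (fun i => w i ^ 2) hpq
  rw [one_div_div, one_div_div] at h
  have e2 : ∀ i : Fin n, |w i ^ 2| ^ (p / 2) = |w i| ^ p := by
    intro i
    have h1 : |w i ^ 2| = |w i| ^ (2:ℕ) := by rw [abs_pow]
    rw [h1, ← Real.rpow_natCast (|w i|) 2, ← Real.rpow_mul (abs_nonneg _)]
    congr 1
    push_cast
    ring
  have e1 : ∀ i : Fin n, |if 0 < u i then u i ^ (p - 2) else 0| ^ (p / (p - 2))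
      ≤ max (u i) 0 ^ p := by
    intro i
    by_cases hu : 0 < u i
    · rw [if_pos hu, abs_of_nonneg (Real.rpow_nonneg hu.le _), ← Real.rpow_mul hu.le,
        max_eq_left hu.le]
      have he : (p - 2) * (p / (p - 2)) = p := by rw [mul_comm, div_mul_cancel₀ _ hp2]
      rw [he]
    · rw [if_neg hu, abs_zero,
        Real.zero_rpow (ne_of_gt (div_pos hp0 (by linarith : (0:ℝ) < p - 2)))]
      positivity
  have h2 : (∑ i, |w i ^ 2| ^ (p / 2)) = ∑ i, |w i| ^ p :=
    Finset.sum_congr rfl fun i _ => e2 i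
  rw [h2] at h
  refine h.trans ?_
  apply mul_le_mul_of_nonneg_right _ (Real.rpow_nonneg ?_ _)
  · exact Real.rpow_le_rpow (Finset.sum_nonneg fun i _ => Real.rpow_nonneg (abs_nonneg _) _)
      (Finset.sum_le_sum fun i _ => e1 i) (div_nonneg (by linarith) (by linarith))
  · exact Finset.sum_nonneg fun i _ => Real.rpow_nonneg (abs_nonneg _) _


noncomputable def Sfun {n : ℕ} (p : ℝ) (x y : Fin n → ℝ) (t : ℝ) : ℝ :=
  ∑ i, max (x i + t * y i) 0 ^ p

noncomputable def Tfun {n : ℕ} (p : ℝ) (x y : Fin n → ℝ) (t : ℝ) : ℝ :=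
  ∑ i, max (x i + t * y i) 0 ^ (p - 1) * y i

noncomputable def Gfun {n : ℕ} (p : ℝ) (x y : Fin n → ℝ) (t : ℝ) : ℝ :=
  2 * Sfun p x y t ^ ((2 - p) / p) * Tfun p x y t

variable {n : ℕ} {p : ℝ} {x y : Fin n → ℝ}

lemma S_nonneg (hp0 : 0 < p) (t : ℝ) : 0 ≤ Sfun p x y t :=
  Finset.sum_nonneg fun i _ => Real.rpow_nonneg (le_max_right _ _) _

lemma S_eq_zero (hp0 : 0 < p) {t : ℝ} (h : Sfun p x y t = 0) :
    ∀ i, x i + t * y i ≤ 0 := by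
  intro i
  have hall := (Finset.sum_eq_zero_iff_of_nonneg
    (fun i _ => Real.rpow_nonneg (le_max_right (x i + t * y i) 0) p)).1 h i (Finset.mem_univ i)
  have := (Real.rpow_eq_zero (le_max_right _ _) hp0.ne').1 hall
  rw [← this]
  exact le_max_left _ _

lemma T_eq_zero (hp1 : 1 < p) {t : ℝ} (h : Sfun p x y t = 0) : Tfun p x y t = 0 := by
  have h0 := S_eq_zero (by linarith) h
  apply Finset.sum_eq_zero
  intro i _
  rw [max_eq_right (h0 i), Real.zero_rpow (by intro hc; nlinarith : p - 1 ≠ 0), zero_mul]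

lemma G_eq_zero (hp1 : 1 < p) {t : ℝ} (h : Sfun p x y t = 0) : Gfun p x y t = 0 := by
  rw [Gfun, T_eq_zero hp1 h, mul_zero]

lemma S_cont (hp0 : 0 < p) : Continuous (Sfun p x y) := by
  apply continuous_finset_sum
  intro i _
  exact ((continuous_const.add (continuous_id.mul continuous_const)).max
    continuous_const).rpow_const fun _ => Or.inr hp0.le

lemma T_cont (hp1 : 1 < p) : Continuous (Tfun p x y) := by
  apply continuous_finset_sum
  intro i _
  exact (((continuous_const.add (continuous_id.mul continuous_const)).max
    continuous_const).rpow_const fun _ => Or.inr (by linarith)).mul continuous_const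

lemma T_abs_le (hp1 : 1 < p) (t : ℝ) :
    |Tfun p x y t| ≤ Sfun p x y t ^ ((p - 1) / p) * (∑ i, |y i| ^ p) ^ (1 / p) := by
  have := holder1_abs hp1 (fun i => max (x i + t * y i) 0) y fun i => le_max_right _ _
  simpa [Tfun, Sfun] using this

lemma G_abs_le (hp1 : 1 < p) (t : ℝ) :
    |Gfun p x y t| ≤ 2 * Sfun p x y t ^ (1 / p) * (∑ i, |y i| ^ p) ^ (1 / p) := by
  have hp0 : (0:ℝ) < p := by linarith
  rcases eq_or_lt_of_le (S_nonneg hp0 t) with hS | hS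
  · rw [G_eq_zero hp1 hS.symm, ← hS, abs_zero,
      Real.zero_rpow (by positivity : (1:ℝ)/p ≠ 0)]
    simp
  · rw [Gfun, abs_mul, abs_of_nonneg (by positivity : (0:ℝ) ≤ 2 * Sfun p x y t ^ ((2 - p) / p))]
    calc 2 * Sfun p x y t ^ ((2 - p) / p) * |Tfun p x y t|
        ≤ 2 * Sfun p x y t ^ ((2 - p) / p) *
          (Sfun p x y t ^ ((p - 1) / p) * (∑ i, |y i| ^ p) ^ (1 / p)) := by
          apply mul_le_mul_of_nonneg_left (T_abs_le hp1 t) (by positivity)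
      _ = 2 * Sfun p x y t ^ (1 / p) * (∑ i, |y i| ^ p) ^ (1 / p) := by
          rw [mul_assoc, ← mul_assoc (Sfun p x y t ^ ((2 - p) / p)),
            ← Real.rpow_add hS]
          ring_nf
lemma G_cont (hp1 : 1 < p) : Continuous (fun t => Gfun p x y t) := by
  have hp0 : (0:ℝ) < p := by linarith
  rw [continuous_iff_continuousAt]
  intro t
  rcases eq_or_lt_of_le (S_nonneg (x := x) (y := y) hp0 t) with hS | hS
  · show Tendsto (fun s => Gfun p x y s) (𝓝 t) (𝓝 (Gfun p x y t))
    rw [G_eq_zero hp1 hS.symm]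
    have hb : ContinuousAt (fun s => 2 * Sfun p x y s ^ (1/p) * (∑ i, |y i| ^ p) ^ (1/p)) t :=
      (continuousAt_const.mul ((S_cont hp0).continuousAt.rpow_const
        (Or.inr (by positivity)))).mul continuousAt_const
    have hval : 2 * Sfun p x y t ^ (1/p) * (∑ i, |y i| ^ p) ^ (1/p) = 0 := by
      rw [← hS, Real.zero_rpow (by positivity : (1:ℝ)/p ≠ 0)]
      ring
    have htend := hb.tendsto
    rw [hval] at htend
    exact squeeze_zero_norm (fun s => G_abs_le hp1 s) htend
  · exact (continuousAt_const.mul ((S_cont hp0).continuousAt.rpow_const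
      (Or.inl hS.ne'))).mul (T_cont hp1).continuousAt

lemma hasDerivAt_S (hp1 : 1 < p) (t : ℝ) :
    HasDerivAt (Sfun p x y) (p * Tfun p x y t) t := by
  have h : ∀ i : Fin n, HasDerivAt (fun t => max (x i + t * y i) 0 ^ p)
      ((p * max (x i + t * y i) 0 ^ (p - 1)) * y i) t := by
    intro i
    have hin : HasDerivAt (fun t : ℝ => x i + t * y i) (y i) t :=
      (hasDerivAt_mul_const (y i)).const_add (x i)
    exact (reluPow_deriv hp1 (x i + t * y i)).comp t hin
  have heq : p * Tfun p x y t = ∑ i, (p * max (x i + t * y i) 0 ^ (p - 1)) * y i := by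
    rw [Tfun, Finset.mul_sum]
    exact Finset.sum_congr rfl fun i _ => by ring
  rw [heq]
  exact HasDerivAt.fun_sum fun i _ => h i

lemma hasDerivAt_psi (hp : 2 ≤ p) (t : ℝ) :
    HasDerivAt (fun s => Sfun p x y s ^ (2 / p)) (Gfun p x y t) t := by
  have hp0 : (0:ℝ) < p := by linarith
  have hp1 : (1:ℝ) < p := by linarith
  rcases eq_or_lt_of_le (S_nonneg (x := x) (y := y) hp0 t) with hS | hS
  · rw [G_eq_zero hp1 hS.symm, hasDerivAt_iff_tendsto]
    set K' : ℝ := (∑ i, |y i| ^ p) ^ (2/p) with hK'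
    have hKnn : (0:ℝ) ≤ K' := Real.rpow_nonneg (by positivity) _
    have hb : ∀ s : ℝ, ‖s - t‖⁻¹ * ‖Sfun p x y s ^ (2/p) - Sfun p x y t ^ (2/p) - (s - t) • (0:ℝ)‖
        ≤ |s - t| * K' := by
      intro s
      rcases eq_or_ne s t with rfl | hst
      · simp
        try positivity
      · have habs : (0:ℝ) < |s - t| := abs_pos.2 (sub_ne_zero.2 hst)
        have hpsi : Sfun p x y s ^ (2/p) ≤ |s - t| ^ (2:ℝ) * K' := by
          have hSb : Sfun p x y s ≤ |s - t| ^ p * ∑ i, |y i| ^ p := by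
            rw [Sfun, Finset.mul_sum]
            apply Finset.sum_le_sum
            intro i _
            have hzero := S_eq_zero (x := x) (y := y) hp0 hS.symm i
            have h1 : max (x i + s * y i) 0 ≤ |s - t| * |y i| := by
              apply max_le _ (by positivity)
              have heq2 : x i + s * y i = (x i + t * y i) + (s - t) * y i := by ring
              rw [heq2]
              calc (x i + t * y i) + (s - t) * y i ≤ (s - t) * y i := by linarith
                _ ≤ |(s - t) * y i| := le_abs_self _
                _ = |s - t| * |y i| := abs_mul _ _
            calc max (x i + s * y i) 0 ^ p ≤ (|s - t| * |y i|) ^ p :=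
                Real.rpow_le_rpow (le_max_right _ _) h1 hp0.le
              _ = |s - t| ^ p * |y i| ^ p := Real.mul_rpow (abs_nonneg _) (abs_nonneg _)
          calc Sfun p x y s ^ (2/p) ≤ (|s - t| ^ p * ∑ i, |y i| ^ p) ^ (2/p) :=
              Real.rpow_le_rpow (S_nonneg hp0 s) hSb (by positivity)
            _ = (|s - t| ^ p) ^ (2/p) * K' := by
              rw [hK', Real.mul_rpow (by positivity) (by positivity)]
            _ = |s - t| ^ (2:ℝ) * K' := by
              rw [← Real.rpow_mul (abs_nonneg _), show p * (2/p) = 2 from by field_simp]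
        rw [smul_zero, sub_zero, ← hS, Real.zero_rpow (by positivity : 2/p ≠ 0), sub_zero,
          Real.norm_eq_abs, Real.norm_eq_abs,
          abs_of_nonneg (Real.rpow_nonneg (S_nonneg hp0 s) _)]
        have h2 : |s - t| ^ (2:ℝ) = |s - t| * |s - t| := by
          rw [show (2:ℝ) = ((2:ℕ):ℝ) by norm_num, Real.rpow_natCast]
          ring
        calc |s - t|⁻¹ * Sfun p x y s ^ (2/p) ≤ |s - t|⁻¹ * (|s - t| ^ (2:ℝ) * K') :=
            mul_le_mul_of_nonneg_left hpsi (by positivity)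
          _ = |s - t| * K' := by
            rw [h2, ← mul_assoc, ← mul_assoc, inv_mul_cancel₀ habs.ne', one_mul]
    apply squeeze_zero (fun s => by positivity) hb
    have hcont : Tendsto (fun s : ℝ => |s - t| * K') (𝓝 t) (𝓝 (|t - t| * K')) :=
      ((continuous_abs.comp (continuous_id.sub continuous_const)).mul continuous_const).continuousAt
    simpa using hcont
  · have houter : HasDerivAt (fun z : ℝ => z ^ (2/p)) ((2/p) * Sfun p x y t ^ (2/p - 1))
        (Sfun p x y t) := Real.hasDerivAt_rpow_const (Or.inl hS.ne')
    have hcomp := houter.comp t (hasDerivAt_S hp1 t)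
    refine hcomp.congr_deriv (Eq.symm ?_)
    rw [Gfun, show (2-p)/p = 2/p - 1 by field_simp]
    ring_nf
    rw [mul_inv_cancel₀ hp0.ne', one_mul]
lemma hasDerivAt_T (hp1 : 1 < p) {t : ℝ} (hgood : ∀ i, y i ≠ 0 → x i + t * y i ≠ 0) :
    HasDerivAt (Tfun p x y)
      (∑ i, (if 0 < x i + t * y i then (p - 1) * (x i + t * y i) ^ (p - 2) else 0)
        * (y i * y i)) t := by
  unfold Tfun
  apply HasDerivAt.fun_sum
  intro i _
  by_cases hy : y i = 0
  · have hfe : (fun s : ℝ => max (x i + s * y i) 0 ^ (p - 1) * y i) = fun _ => 0 := by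
      funext s; rw [hy, mul_zero]
    rw [hfe, hy]
    simpa using hasDerivAt_const t (0:ℝ)
  · have hin : HasDerivAt (fun s : ℝ => x i + s * y i) (y i) t :=
      (hasDerivAt_mul_const (y i)).const_add (x i)
    rcases (hgood i hy).lt_or_gt with hu | hu
    · have houter := reluPow_deriv_neg (q := p - 1) (by linarith) hu
      have hcomp := (houter.comp t hin).mul_const (y i)
      have hif : (if 0 < x i + t * y i then (p - 1) * (x i + t * y i) ^ (p - 2) else 0)
          * (y i * y i) = 0 * y i * y i := by
        rw [if_neg (by linarith : ¬ 0 < x i + t * y i)]; ring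
      rw [hif]
      exact hcomp
    · have houter := reluPow_deriv_pos (q := p - 1) hu
      have hcomp := (houter.comp t hin).mul_const (y i)
      have hif : (if 0 < x i + t * y i then (p - 1) * (x i + t * y i) ^ (p - 2) else 0)
          * (y i * y i) = (p - 1) * (x i + t * y i) ^ (p - 1 - 1) * y i * y i := by
        rw [if_pos hu, show p - 1 - 1 = p - 2 by ring]; ring
      rw [hif]
      exact hcomp

lemma D_le (hp : 2 ≤ p) (t : ℝ) :
    ∑ i, (if 0 < x i + t * y i then (p - 1) * (x i + t * y i) ^ (p - 2) else 0) * (y i * y i)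
      ≤ (p - 1) * (Sfun p x y t ^ ((p - 2) / p) * (∑ i, |y i| ^ p) ^ (2 / p)) := by
  have step1 : ∑ i, (if 0 < x i + t * y i then (p - 1) * (x i + t * y i) ^ (p - 2) else 0)
      * (y i * y i)
      = (p - 1) * ∑ i, (if 0 < x i + t * y i then (x i + t * y i) ^ (p - 2) else 0) * y i ^ 2 := by
    rw [Finset.mul_sum]
    apply Finset.sum_congr rfl
    intro i _
    by_cases h : 0 < x i + t * y i
    · rw [if_pos h, if_pos h]; ring
    · rw [if_neg h, if_neg h]; ring
  rw [step1]
  apply mul_le_mul_of_nonneg_left _ (by linarith : (0:ℝ) ≤ p - 1)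
  rcases eq_or_lt_of_le hp with hp2 | hp2
  · subst hp2
    have habs : ∀ i : Fin n, |y i| ^ (2:ℝ) = y i ^ 2 := by
      intro i
      rw [show (2:ℝ) = ((2:ℕ):ℝ) by norm_num, Real.rpow_natCast, sq_abs]
    calc ∑ i, (if 0 < x i + t * y i then (x i + t * y i) ^ ((2:ℝ) - 2) else 0) * y i ^ 2
        ≤ ∑ i, y i ^ 2 := by
          apply Finset.sum_le_sum
          intro i _
          by_cases h : 0 < x i + t * y i
          · rw [if_pos h, show (2:ℝ) - 2 = 0 by ring, Real.rpow_zero, one_mul]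
          · rw [if_neg h, zero_mul]; positivity
      _ = Sfun 2 x y t ^ (((2:ℝ) - 2) / 2) * (∑ i, |y i| ^ (2:ℝ)) ^ ((2:ℝ) / 2) := by
          rw [show ((2:ℝ) - 2) / 2 = 0 by ring, Real.rpow_zero, one_mul,
            show (2:ℝ)/2 = 1 by norm_num, Real.rpow_one]
          exact (Finset.sum_congr rfl fun i _ => (habs i).symm)
  · exact holder2 hp2 _ y

lemma G_deriv_bound (hp : 2 ≤ p) {t : ℝ} (hgood : ∀ i, y i ≠ 0 → x i + t * y i ≠ 0) :
    ∃ d, d ≤ 2 * (p - 1) * (∑ i, |y i| ^ p) ^ (2 / p) ∧ HasDerivAt (Gfun p x y) d t := by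
  have hp0 : (0:ℝ) < p := by linarith
  have hp1 : (1:ℝ) < p := by linarith
  have hK2 : (0:ℝ) ≤ (∑ i, |y i| ^ p) ^ (2/p) := Real.rpow_nonneg (by positivity) _
  rcases eq_or_lt_of_le (S_nonneg (x := x) (y := y) hp0 t) with hS | hS
  · refine ⟨0, by nlinarith, ?_⟩
    have hev : ∀ᶠ s in 𝓝 t, ∀ i, x i + s * y i ≤ 0 := by
      rw [Filter.eventually_all]
      intro i
      by_cases hy : y i = 0
      · have h0 := S_eq_zero (x := x) (y := y) hp0 hS.symm i
        rw [hy] at h0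
        filter_upwards with s
        rw [hy]
        linarith
      · have hlt : x i + t * y i < 0 :=
          lt_of_le_of_ne (S_eq_zero hp0 hS.symm i) (hgood i hy)
        have hcont : ContinuousAt (fun s : ℝ => x i + s * y i) t :=
          (continuous_const.add (continuous_id.mul continuous_const)).continuousAt
        filter_upwards [hcont.preimage_mem_nhds (Iio_mem_nhds hlt)] with s hs
        exact le_of_lt hs
    have hev2 : Gfun p x y =ᶠ[𝓝 t] fun _ => 0 := by
      filter_upwards [hev] with s hs
      apply G_eq_zero hp1
      apply Finset.sum_eq_zero
      intro i _
      rw [max_eq_right (hs i), Real.zero_rpow hp0.ne']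
    exact (hasDerivAt_const t (0:ℝ)).congr_of_eventuallyEq hev2
  · have houter : HasDerivAt (fun z : ℝ => z ^ ((2 - p)/p))
        ((2 - p)/p * Sfun p x y t ^ ((2 - p)/p - 1)) (Sfun p x y t) :=
      Real.hasDerivAt_rpow_const (Or.inl hS.ne')
    have h1 : HasDerivAt (fun s => 2 * Sfun p x y s ^ ((2 - p)/p))
        (2 * ((2 - p)/p * Sfun p x y t ^ ((2 - p)/p - 1) * (p * Tfun p x y t))) t := by
      have hc := (houter.comp t (hasDerivAt_S hp1 t)).const_mul 2
      refine hc.congr_deriv ?_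
      try ring
    have hmul := h1.mul (hasDerivAt_T hp1 hgood)
    refine ⟨_, ?_, hmul⟩
    have hfirst : 2 * ((2 - p)/p * Sfun p x y t ^ ((2 - p)/p - 1) * (p * Tfun p x y t))
        * Tfun p x y t ≤ 0 := by
      have heq : 2 * ((2 - p)/p * Sfun p x y t ^ ((2 - p)/p - 1) * (p * Tfun p x y t))
          * Tfun p x y t
          = (2 - p) * (2 * Sfun p x y t ^ ((2 - p)/p - 1)
            * (Tfun p x y t * Tfun p x y t)) := by
        field_simp
        try ring
      rw [heq]
      have hb : 0 ≤ 2 * Sfun p x y t ^ ((2 - p)/p - 1) * (Tfun p x y t * Tfun p x y t) :=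
        mul_nonneg (mul_nonneg (by norm_num) (Real.rpow_nonneg (S_nonneg hp0 t) _))
          (mul_self_nonneg _)
      have h2p : 2 - p ≤ 0 := by linarith
      nlinarith
    have hsecond : (2 * Sfun p x y t ^ ((2 - p)/p))
        * (∑ i, (if 0 < x i + t * y i then (p - 1) * (x i + t * y i) ^ (p - 2) else 0)
          * (y i * y i))
        ≤ 2 * (p - 1) * (∑ i, |y i| ^ p) ^ (2/p) := by
      have h2e : (0:ℝ) ≤ 2 * Sfun p x y t ^ ((2 - p)/p) :=
        mul_nonneg (by norm_num) (Real.rpow_nonneg (S_nonneg hp0 t) _)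
      calc (2 * Sfun p x y t ^ ((2 - p)/p)) * _
          ≤ (2 * Sfun p x y t ^ ((2 - p)/p))
            * ((p - 1) * (Sfun p x y t ^ ((p - 2)/p) * (∑ i, |y i| ^ p) ^ (2/p))) :=
            mul_le_mul_of_nonneg_left (D_le hp t) h2e
        _ = 2 * (p - 1) * (Sfun p x y t ^ ((2 - p)/p) * Sfun p x y t ^ ((p - 2)/p))
            * (∑ i, |y i| ^ p) ^ (2/p) := by ring
        _ = 2 * (p - 1) * (∑ i, |y i| ^ p) ^ (2/p) := by
            rw [← Real.rpow_add hS, show (2 - p)/p + (p - 2)/p = 0 by field_simp; ring, Real.rpow_zero]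
            ring
    linarith

lemma polyPot_eq {m : ℕ} {q : ℝ} (hq0 : 0 < q) (v : Fin m → ℝ) :
    polyPot q v = (∑ i, max (v i) 0 ^ q) ^ (2/q) := by
  rw [polyPot, pNorm]
  have h1 : (∑ i, |max (v i) 0| ^ q) = ∑ i, max (v i) 0 ^ q :=
    Finset.sum_congr rfl fun i _ => by rw [abs_of_nonneg (le_max_right _ _)]
  rw [h1, ← Real.rpow_natCast ((∑ i, max (v i) 0 ^ q) ^ (1/q)) 2,
    ← Real.rpow_mul (Finset.sum_nonneg fun i _ => Real.rpow_nonneg (le_max_right _ _) _)]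
  congr 1
  push_cast
  field_simp

lemma pNorm_sq {m : ℕ} {q : ℝ} (hq0 : 0 < q) (v : Fin m → ℝ) :
    pNorm q v ^ 2 = (∑ i, |v i| ^ q) ^ (2/q) := by
  rw [pNorm, ← Real.rpow_natCast ((∑ i, |v i| ^ q) ^ (1/q)) 2,
    ← Real.rpow_mul (Finset.sum_nonneg fun i _ => Real.rpow_nonneg (abs_nonneg _) _)]
  congr 1
  push_cast
  field_simp

lemma rpow_two_halves {q w : ℝ} (hw : 0 ≤ w) (hq0 : 0 < q) :
    w ^ (2/q) = w ^ (1/q) * w ^ (1/q) := by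
  rcases eq_or_lt_of_le hw with h | h
  · rw [← h, Real.zero_rpow (by positivity : 2/q ≠ 0),
      Real.zero_rpow (by positivity : 1/q ≠ 0), mul_zero]
  · rw [← Real.rpow_add h]
    congr 1
    ring

lemma subgrad (hp : 2 ≤ p) (z : Fin n → ℝ) :
    polyPot p x + ∑ i, (2 * (∑ j, max (x j) 0 ^ p) ^ ((2 - p)/p) * max (x i) 0 ^ (p - 1))
      * (z i - x i) ≤ polyPot p z := by
  have hp0 : (0:ℝ) < p := by linarith
  have hp1 : p - 1 ≠ 0 := by intro h; nlinarith
  set S0 : ℝ := ∑ j, max (x j) 0 ^ p with hS0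
  set Sz : ℝ := ∑ j, max (z j) 0 ^ p with hSz
  have hS0nn : 0 ≤ S0 := Finset.sum_nonneg fun i _ => Real.rpow_nonneg (le_max_right _ _) _
  have hSznn : 0 ≤ Sz := Finset.sum_nonneg fun i _ => Real.rpow_nonneg (le_max_right _ _) _
  rw [polyPot_eq hp0 x, polyPot_eq hp0 z, ← hS0, ← hSz]
  rcases eq_or_lt_of_le hS0nn with hS | hS
  · have hx0 : ∀ j, max (x j) 0 = 0 := by
      intro j
      have hall := (Finset.sum_eq_zero_iff_of_nonneg
        (fun i _ => Real.rpow_nonneg (le_max_right (x i) 0) p)).1 hS.symm j (Finset.mem_univ j)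
      exact (Real.rpow_eq_zero (le_max_right _ _) hp0.ne').1 hall
    have hzero : ∀ i : Fin n, (2 * S0 ^ ((2 - p)/p) * max (x i) 0 ^ (p - 1)) * (z i - x i) = 0 := by
      intro i
      rw [hx0 i, Real.zero_rpow hp1]
      ring
    rw [Finset.sum_congr rfl fun i _ => hzero i, Finset.sum_const, smul_zero, add_zero,
      ← hS, Real.zero_rpow (by positivity : 2/p ≠ 0)]
    exact Real.rpow_nonneg hSznn _
  · -- S0 > 0
    have hgx : ∑ i, (2 * S0 ^ ((2 - p)/p) * max (x i) 0 ^ (p - 1)) * x i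
        = 2 * S0 ^ ((2 - p)/p) * S0 := by
      rw [hS0, Finset.mul_sum]
      apply Finset.sum_congr rfl
      intro i _
      have hterm : max (x i) 0 ^ (p - 1) * x i = max (x i) 0 ^ p := by
        rcases le_or_gt (x i) 0 with h | h
        · rw [max_eq_right h, Real.zero_rpow hp1, Real.zero_rpow hp0.ne', zero_mul]
        · rw [max_eq_left h.le]
          nth_rewrite 2 [← Real.rpow_one (x i)]
          rw [← Real.rpow_add h, show p - 1 + 1 = p by ring]
      rw [← hterm]
      ring
    have hgz : ∑ i, (2 * S0 ^ ((2 - p)/p) * max (x i) 0 ^ (p - 1)) * z i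
        ≤ 2 * S0 ^ ((2 - p)/p) * (S0 ^ ((p - 1)/p) * Sz ^ (1/p)) := by
      have h1 : ∑ i, (2 * S0 ^ ((2 - p)/p) * max (x i) 0 ^ (p - 1)) * z i
          = 2 * S0 ^ ((2 - p)/p) * ∑ i, max (x i) 0 ^ (p - 1) * z i := by
        rw [Finset.mul_sum]
        exact Finset.sum_congr rfl fun i _ => by ring
      rw [h1]
      apply mul_le_mul_of_nonneg_left _ (by
        exact mul_nonneg (by norm_num) (Real.rpow_nonneg hS0nn _))
      calc ∑ i, max (x i) 0 ^ (p - 1) * z i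
          ≤ ∑ i, max (x i) 0 ^ (p - 1) * max (z i) 0 := by
            apply Finset.sum_le_sum
            intro i _
            exact mul_le_mul_of_nonneg_left (le_max_left _ _)
              (Real.rpow_nonneg (le_max_right _ _) _)
        _ ≤ (∑ i, max (x i) 0 ^ p) ^ ((p - 1)/p) * (∑ i, |max (z i) 0| ^ p) ^ (1/p) :=
            holder1 (by linarith) _ _ (fun i => le_max_right _ _)
        _ = S0 ^ ((p - 1)/p) * Sz ^ (1/p) := by
            rw [hS0, hSz]
            congr 2
            exact Finset.sum_congr rfl fun i _ => by
              rw [abs_of_nonneg (le_max_right _ _)]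
    have hsplit : ∑ i, (2 * S0 ^ ((2 - p)/p) * max (x i) 0 ^ (p - 1)) * (z i - x i)
        = (∑ i, (2 * S0 ^ ((2 - p)/p) * max (x i) 0 ^ (p - 1)) * z i)
          - ∑ i, (2 * S0 ^ ((2 - p)/p) * max (x i) 0 ^ (p - 1)) * x i := by
      rw [← Finset.sum_sub_distrib]
      exact Finset.sum_congr rfl fun i _ => by ring
    set A : ℝ := S0 ^ (1/p) with hA
    set B : ℝ := Sz ^ (1/p) with hB
    have hApos : 0 < A := Real.rpow_pos_of_pos hS _
    have hBnn : 0 ≤ B := Real.rpow_nonneg hSznn _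
    have hS02 : S0 ^ (2/p) = A * A := rpow_two_halves hS0nn hp0
    have hSz2 : Sz ^ (2/p) = B * B := rpow_two_halves hSznn hp0
    have hcollapse : 2 * S0 ^ ((2 - p)/p) * (S0 ^ ((p - 1)/p) * Sz ^ (1/p)) = 2 * A * B := by
      rw [hA, mul_assoc, ← mul_assoc (S0 ^ ((2 - p)/p)), ← Real.rpow_add hS,
        show (2 - p)/p + (p - 1)/p = 1/p by ring]
      ring
    have hgx2 : 2 * S0 ^ ((2 - p)/p) * S0 = 2 * (A * A) := by
      rw [← hS02]
      nth_rewrite 2 [← Real.rpow_one S0]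
      rw [mul_assoc, ← Real.rpow_add hS, show (2 - p)/p + 1 = 2/p by field_simp; ring]
    rw [hsplit, hgx, hS02, hSz2, hgx2]
    have hgzB := hgz.trans_eq hcollapse
    nlinarith [sq_nonneg (A - B), hgzB]

theorem stmt_9 {n : ℕ} (p : ℝ) (hp : 2 ≤ p) (x y : Fin n → ℝ) :
    ∃ g : Fin n → ℝ,
      (∀ z : Fin n → ℝ, polyPot p x + ∑ i, g i * (z i - x i) ≤ polyPot p z) ∧
      polyPot p (fun i => max (x i + y i) 0)
        ≤ polyPot p x + (∑ i, g i * y i) + (p - 1) * pNorm p y ^ 2 := by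
  classical
  have hp0 : (0:ℝ) < p := by linarith
  have hp1 : (1:ℝ) < p := by linarith
  refine ⟨fun i => 2 * (∑ j, max (x j) 0 ^ p) ^ ((2 - p)/p) * max (x i) 0 ^ (p - 1),
    fun z => subgrad hp z, ?_⟩
  set K2 : ℝ := (∑ i, |y i| ^ p) ^ (2/p) with hK2
  set L : ℝ := 2 * (p - 1) * K2 with hL
  have hK2nn : 0 ≤ K2 := Real.rpow_nonneg (by positivity) _
  -- basic identifications
  have hS0 : Sfun p x y 0 = ∑ j, max (x j) 0 ^ p := by
    unfold Sfun
    apply Finset.sum_congr rfl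
    intro i _
    norm_num
  have hG0 : Gfun p x y 0
      = ∑ i, (2 * (∑ j, max (x j) 0 ^ p) ^ ((2 - p)/p) * max (x i) 0 ^ (p - 1)) * y i := by
    rw [Gfun, Tfun, hS0, Finset.mul_sum]
    apply Finset.sum_congr rfl
    intro i _
    norm_num
    ring
  -- monotonicity of L * t - G t
  have hH : ∀ a b : ℝ, a ≤ b → L * a - Gfun p x y a ≤ L * b - Gfun p x y b := by
    apply mono_except (Finset.image (fun i => - x i / y i) Finset.univ)
    · exact (continuous_const.mul continuous_id).sub (G_cont hp1)
    · intro t ht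
      have hgood : ∀ i, y i ≠ 0 → x i + t * y i ≠ 0 := by
        intro i hy hzero
        apply ht
        refine Finset.mem_image.2 ⟨i, Finset.mem_univ i, ?_⟩
        field_simp
        linarith [hzero]
      obtain ⟨d, hd, hdd⟩ := G_deriv_bound hp hgood
      have hLd : d ≤ L := by rw [hL, hK2]; exact hd
      have hLt : HasDerivAt (fun s : ℝ => L * s) L t := by
        simpa using (hasDerivAt_id t).const_mul L
      exact ⟨L - d, by linarith, hLt.sub hdd⟩
  have hG0le : ∀ t : ℝ, 0 ≤ t → Gfun p x y t - Gfun p x y 0 - L * t ≤ 0 := by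
    intro t ht
    have h := hH 0 t ht
    simp only [mul_zero] at h
    linarith
  -- the comparison function
  set θ : ℝ → ℝ := fun t => Sfun p x y t ^ (2/p) - Sfun p x y 0 ^ (2/p)
    - Gfun p x y 0 * t - (p - 1) * K2 * t^2 with hθ
  have hθd : ∀ t, HasDerivAt θ (Gfun p x y t - Gfun p x y 0 - L * t) t := by
    intro t
    have h1 := ((hasDerivAt_psi (x := x) (y := y) hp t).sub_const (Sfun p x y 0 ^ (2/p)))
    have h2 : HasDerivAt (fun s : ℝ => Gfun p x y 0 * s) (Gfun p x y 0) t := by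
      simpa using (hasDerivAt_id t).const_mul (Gfun p x y 0)
    have h3 : HasDerivAt (fun s : ℝ => (p - 1) * K2 * s^2) ((p - 1) * K2 * (2 * t)) t := by
      have := (hasDerivAt_pow 2 t).const_mul ((p - 1) * K2)
      simpa using this
    have hcomb := (h1.sub h2).sub h3
    refine hcomb.congr_deriv ?_
    rw [hL]
    ring
  have hmono : AntitoneOn θ (Set.Icc 0 1) := by
    apply antitoneOn_of_deriv_nonpos (convex_Icc 0 1)
    · apply Continuous.continuousOn
      rw [continuous_iff_continuousAt]
      intro t
      exact (hθd t).continuousAt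
    · intro t ht
      exact (hθd t).differentiableAt.differentiableWithinAt
    · intro t ht
      rw [interior_Icc] at ht
      rw [(hθd t).deriv]
      exact hG0le t ht.1.le
  have hfinal := hmono (Set.left_mem_Icc.2 zero_le_one) (Set.right_mem_Icc.2 zero_le_one)
    zero_le_one
  have hθ0 : θ 0 = 0 := by
    rw [hθ]
    ring
  have hθ1 : θ 1 = Sfun p x y 1 ^ (2/p) - Sfun p x y 0 ^ (2/p) - Gfun p x y 0 - (p - 1) * K2 := by
    rw [hθ]
    ring
  rw [hθ1, hθ0] at hfinal
  -- translate to the goal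
  have e1 : polyPot p (fun i => max (x i + y i) 0) = Sfun p x y 1 ^ (2/p) := by
    rw [polyPot_eq hp0]
    congr 1
    unfold Sfun
    apply Finset.sum_congr rfl
    intro i _
    rw [max_eq_left (le_max_right _ _), one_mul]
  have e2 : polyPot p x = Sfun p x y 0 ^ (2/p) := by
    rw [polyPot_eq hp0, hS0]
  have e3 : (p - 1) * pNorm p y ^ 2 = (p - 1) * K2 := by
    rw [pNorm_sq hp0, hK2]
  rw [e1, e2, e3, ← hG0]
  linarith
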